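/- Let n ≥ 1 and r, s ≥ 0, and let D = {λ ∈ ℤ^n : λ_1 + ⋯ + λ_n = r − s, and for every nonempty proper subset A ⊊ {1,…,n}, −s ≤ Σ_{a∈A} λ_a ≤ r}, viewed as a finite set of points of ℚ^n. Then the vanishing ideal in ℚ[X_1,…,X_n] of D equals the ideal generated by the polynomial (X_1 + ⋯ + X_n) − (r − s) together with the polynomials (P_A + s)(P_A + s − 1)⋯(P_A − r + 1)(P_A − r) for each nonempty proper subset A ⊊ {1,…,n}, where P_A = Σ_{a∈A} X_a. -/

import Mathlib

open MvPolynomial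

lemma grid_lemma : ∀ (n : ℕ) (T : Finset ℚ) (f : MvPolynomial (Fin n) ℚ),
    (∀ x : Fin n → ℚ, (∀ a, x a ∈ T) → MvPolynomial.eval x f = 0) →
    f ∈ Ideal.span (Set.range fun a : Fin n =>
      ∏ t ∈ T, (MvPolynomial.X a - MvPolynomial.C t)) := by
  intro n
  induction n with
  | zero =>
    intro T f hf
    obtain ⟨c, rfl⟩ := MvPolynomial.C_surjective (Fin 0) f
    have := hf (fun a => a.elim0) (fun a => a.elim0)
    rw [eval_C] at this
    rw [this, map_zero]
    exact Ideal.zero_mem _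
  | succ n ih =>
    intro T f hf
    by_cases hT : T = ∅
    · subst hT
      have h1 : (1 : MvPolynomial (Fin (n+1)) ℚ) ∈ Set.range fun a : Fin (n+1) =>
          ∏ t ∈ (∅ : Finset ℚ), (X a - C t) := ⟨0, by simp⟩
      have : Ideal.span (Set.range fun a : Fin (n+1) =>
          ∏ t ∈ (∅ : Finset ℚ), (X a - C t)) = ⊤ :=
        Ideal.eq_top_of_isUnit_mem _ (Ideal.subset_span h1) isUnit_one
      rw [this]; trivial
    -- T nonempty
    have hTcard : 0 < T.card := Finset.card_pos.mpr (Finset.nonempty_of_ne_empty hT)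
    set F := finSuccEquiv ℚ n f with hF
    set G : Polynomial (MvPolynomial (Fin n) ℚ) :=
      ∏ t ∈ T, (Polynomial.X - Polynomial.C (MvPolynomial.C t)) with hG
    have hGmonic : G.Monic :=
      Polynomial.monic_prod_of_monic _ _ (fun t _ => Polynomial.monic_X_sub_C _)
    have hGdeg : G.degree = (T.card : ℕ) := by
      rw [hG, Polynomial.degree_prod]
      simp [Polynomial.degree_X_sub_C]
    set Rm := F %ₘ G with hRm
    set Q := F /ₘ G with hQ
    have hkey : Rm + G * Q = F := Polynomial.modByMonic_add_div F G
    have hRmdeg : Rm.natDegree < T.card := by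
      by_cases h0 : Rm = 0
      · rw [h0]; simpa using hTcard
      · have := Polynomial.degree_modByMonic_lt F hGmonic
        rw [← hRm, hGdeg] at this
        exact (Polynomial.natDegree_lt_iff_degree_lt h0).mpr this
    -- coefficients of Rm vanish on the n-dimensional grid
    have hcoeff : ∀ (k : ℕ) (x : Fin n → ℚ), (∀ a, x a ∈ T) →
        MvPolynomial.eval x (Rm.coeff k) = 0 := by
      intro k x hx
      set p : Polynomial ℚ := Rm.map (MvPolynomial.eval x) with hp
      have hpz : p = 0 := by
        apply Polynomial.eq_zero_of_natDegree_lt_card_of_eval_eq_zero' p T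
        · intro t ht
          have h1 : Polynomial.eval t (F.map (MvPolynomial.eval x)) = 0 := by
            rw [← eval_eq_eval_mv_eval']
            exact hf _ (fun a => Fin.cases ht (fun i => hx i) a)
          have h2 : Polynomial.eval t (G.map (MvPolynomial.eval x)) = 0 := by
            rw [hG, Polynomial.map_prod]
            rw [Polynomial.eval_prod]
            apply Finset.prod_eq_zero ht
            simp
          have h3 : F.map (MvPolynomial.eval x) =
              p + G.map (MvPolynomial.eval x) * Q.map (MvPolynomial.eval x) := by
            rw [hp, ← Polynomial.map_mul, ← Polynomial.map_add, hkey]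
          rw [h3] at h1
          simpa [h2] using h1
        · exact lt_of_le_of_lt Polynomial.natDegree_map_le hRmdeg
      have := congrArg (fun q => Polynomial.coeff q k) hpz
      simpa [hp, Polynomial.coeff_map] using this
    have hmem : ∀ k : ℕ, Rm.coeff k ∈ Ideal.span (Set.range fun a : Fin n =>
        ∏ t ∈ T, (X a - C t)) := fun k => ih T (Rm.coeff k) (hcoeff k)
    set Jbig := Ideal.span (Set.range fun a : Fin (n+1) => ∏ t ∈ T, (X a - C t)) with hJbig
    have hrename : ∀ q, q ∈ Ideal.span (Set.range fun a : Fin n => ∏ t ∈ T, (X a - C t)) →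
        rename Fin.succ q ∈ Jbig := by
      intro q hq
      have hle : Ideal.span (Set.range fun a : Fin n => ∏ t ∈ T, (X a - C t)) ≤
          Jbig.comap (rename (R := ℚ) Fin.succ) := by
        rw [Ideal.span_le]
        rintro _ ⟨a, rfl⟩
        simp only [Ideal.mem_comap, SetLike.mem_coe]
        have : (rename (R := ℚ) Fin.succ) (∏ t ∈ T, (X a - C t)) =
            ∏ t ∈ T, (X a.succ - C t) := by
          rw [map_prod]; simp
        rw [this]
        exact Ideal.subset_span ⟨a.succ, rfl⟩
      exact hle hq
    have hsymmC : ∀ q : MvPolynomial (Fin n) ℚ,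
        (finSuccEquiv ℚ n).symm (Polynomial.C q) = rename Fin.succ q := by
      intro q
      apply (finSuccEquiv ℚ n).injective
      rw [AlgEquiv.apply_symm_apply]
      induction q using MvPolynomial.induction_on with
      | C r => simp [finSuccEquiv_apply]
      | add p1 p2 h1 h2 => rw [map_add, map_add, map_add, h1, h2]
      | mul_X p1 j hj => simp only [map_mul, rename_X, finSuccEquiv_X_succ, hj]
    have hsymmX : (finSuccEquiv ℚ n).symm Polynomial.X = X 0 := by
      rw [← finSuccEquiv_X_zero (n := n) (R := ℚ), AlgEquiv.symm_apply_apply]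
    have hsymmG : (finSuccEquiv ℚ n).symm G = ∏ t ∈ T, (X (0 : Fin (n+1)) - C t) := by
      rw [hG, map_prod]
      apply Finset.prod_congr rfl
      intro t _
      rw [map_sub, hsymmX, hsymmC, rename_C]
    have hRmmem : (finSuccEquiv ℚ n).symm Rm ∈ Jbig := by
      have hRmsum : (finSuccEquiv ℚ n).symm Rm =
          ∑ k ∈ Finset.range (Rm.natDegree + 1),
            rename Fin.succ (Rm.coeff k) * (X (0 : Fin (n+1)))^k := by
        conv_lhs => rw [Rm.as_sum_range_C_mul_X_pow]
        rw [map_sum]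
        apply Finset.sum_congr rfl
        intro k _
        rw [map_mul, map_pow, hsymmC, hsymmX]
      rw [hRmsum]
      apply Ideal.sum_mem
      intro k _
      exact Ideal.mul_mem_right _ _ (hrename _ (hmem k))
    have hfeq : f = (finSuccEquiv ℚ n).symm Rm +
        (∏ t ∈ T, (X (0 : Fin (n+1)) - C t)) * (finSuccEquiv ℚ n).symm Q := by
      rw [← hsymmG, ← map_mul, ← map_add, hkey, AlgEquiv.symm_apply_apply]
    rw [hfeq]
    exact Ideal.add_mem _ hRmmem
      (Ideal.mul_mem_right _ _ (Ideal.subset_span ⟨0, rfl⟩))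

lemma hprod_zero (r s : ℕ) (m : ℤ) (h1 : -(s:ℤ) ≤ m) (h2 : m ≤ r) :
    ∏ j ∈ Finset.range (r+s+1), ((m:ℚ) - ((r:ℚ) - (j:ℚ))) = 0 := by
  apply Finset.prod_eq_zero (i := (r - m).toNat)
  · simp only [Finset.mem_range]; omega
  · have hj : (((r:ℤ) - m).toNat : ℤ) = (r:ℤ) - m := Int.toNat_of_nonneg (by omega)
    have h2 : ((((r:ℤ) - m).toNat : ℤ) : ℚ) = ((r:ℤ):ℚ) - (m:ℚ) := by rw [hj]; push_cast; ring
    push_cast at h2 ⊢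
    rw [h2]; ring

lemma hprod_ne_zero (r s : ℕ) (m : ℤ) (h : ¬(-(s:ℤ) ≤ m ∧ m ≤ r)) :
    ∏ j ∈ Finset.range (r+s+1), ((m:ℚ) - ((r:ℚ) - (j:ℚ))) ≠ 0 := by
  rw [Finset.prod_ne_zero_iff]
  intro j hj
  have hj' : j < r+s+1 := Finset.mem_range.mp hj
  have he : (m:ℚ) - ((r:ℚ) - (j:ℚ)) = ((m - r + j : ℤ) : ℚ) := by push_cast; ring
  rw [he]
  exact_mod_cast (by omega : (m - (r:ℤ) + (j:ℤ) : ℤ) ≠ 0)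

noncomputable def lag (T : Finset ℚ) {n : ℕ} (x : Fin n → ℚ) : MvPolynomial (Fin n) ℚ :=
  ∏ a, ∏ t ∈ T.erase (x a), (MvPolynomial.C (x a - t)⁻¹ * (MvPolynomial.X a - MvPolynomial.C t))

lemma eval_lag_self (T : Finset ℚ) {n : ℕ} (x : Fin n → ℚ) :
    MvPolynomial.eval x (lag T x) = 1 := by
  rw [lag, map_prod]
  apply Finset.prod_eq_one; intro a _
  rw [map_prod]
  apply Finset.prod_eq_one; intro t ht
  simp only [map_mul, map_sub, eval_C, eval_X]
  exact inv_mul_cancel₀ (sub_ne_zero.mpr ((Finset.mem_erase.mp ht).1.symm))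

lemma eval_lag_ne (T : Finset ℚ) {n : ℕ} (x y : Fin n → ℚ) (hy : ∀ a, y a ∈ T) (hxy : y ≠ x) :
    MvPolynomial.eval y (lag T x) = 0 := by
  obtain ⟨a, ha⟩ := Function.ne_iff.mp hxy
  rw [lag, map_prod]
  apply Finset.prod_eq_zero (Finset.mem_univ a)
  rw [map_prod]
  apply Finset.prod_eq_zero (i := y a) (Finset.mem_erase.mpr ⟨ha, hy a⟩)
  simp

/-- Let `D` be the set of `λ ∈ ℤ^n` with `∑ λ_a = r − s` and with
every proper partial sum `∑_{a ∈ A} λ_a` (for `A` a nonempty proper subset of the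
indices) lying in `[−s, r]`, viewed as points of `ℚ^n`.  Then the vanishing ideal of `D`
in `ℚ[X₁,…,Xₙ]` equals the ideal generated by `(X₁ + ⋯ + Xₙ) − (r − s)` together with
`(P_A + s)(P_A + s − 1)⋯(P_A − r)` for each nonempty proper subset `A`, where
`P_A = ∑_{a ∈ A} X_a`. -/
theorem stmt11 (n r s : ℕ) (hn : 1 ≤ n) :
    MvPolynomial.vanishingIdeal ℚ
        ((fun lam : Fin n → ℤ => fun a : Fin n => (lam a : ℚ)) ''
          {lam : Fin n → ℤ |
            (∑ a, lam a) = (r : ℤ) - (s : ℤ) ∧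
            ∀ A : Finset (Fin n), A.Nonempty → A ≠ Finset.univ →
              (-(s : ℤ) ≤ ∑ a ∈ A, lam a ∧ (∑ a ∈ A, lam a) ≤ (r : ℤ))}) =
      Ideal.span
        ({(∑ a, MvPolynomial.X a) - MvPolynomial.C ((r : ℚ) - (s : ℚ))} ∪
          (fun A : Finset (Fin n) =>
              ∏ j ∈ Finset.range (r + s + 1),
                ((∑ a ∈ A, MvPolynomial.X a) - MvPolynomial.C ((r : ℚ) - (j : ℚ)))) ''
            {A : Finset (Fin n) | A.Nonempty ∧ A ≠ Finset.univ}) := by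
  classical
  set T : Finset ℚ := (Finset.range (r+s+1)).image (fun j : ℕ => (r:ℚ) - (j:ℚ)) with hTdef
  set L : MvPolynomial (Fin n) ℚ := (∑ a, X a) - C ((r:ℚ) - (s:ℚ)) with hLdef
  set gen : Finset (Fin n) → MvPolynomial (Fin n) ℚ := fun A =>
    ∏ j ∈ Finset.range (r+s+1), ((∑ a ∈ A, X a) - C ((r:ℚ) - (j:ℚ))) with hgendef
  set Gens : Set (MvPolynomial (Fin n) ℚ) :=
    {L} ∪ gen '' {A : Finset (Fin n) | A.Nonempty ∧ A ≠ Finset.univ} with hGensdef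
  set D : Set (Fin n → ℤ) := {lam : Fin n → ℤ |
            (∑ a, lam a) = (r : ℤ) - (s : ℤ) ∧
            ∀ A : Finset (Fin n), A.Nonempty → A ≠ Finset.univ →
              (-(s : ℤ) ≤ ∑ a ∈ A, lam a ∧ (∑ a ∈ A, lam a) ≤ (r : ℤ))} with hDdef
  set S : Set (Fin n → ℚ) := (fun lam : Fin n → ℤ => fun a : Fin n => (lam a : ℚ)) '' D
    with hSdef
  -- evaluation of the sum of variables over a subset
  have heval_sum : ∀ (A : Finset (Fin n)) (lam : Fin n → ℤ),
      eval (fun a => (lam a : ℚ)) (∑ a ∈ A, X a) = ((∑ a ∈ A, lam a : ℤ) : ℚ) := by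
    intro A lam
    rw [map_sum]
    push_cast
    simp
  have heval_gen : ∀ (A : Finset (Fin n)) (lam : Fin n → ℤ),
      eval (fun a => (lam a : ℚ)) (gen A) =
        ∏ j ∈ Finset.range (r+s+1), ((((∑ a ∈ A, lam a : ℤ)) : ℚ) - ((r:ℚ) - (j:ℚ))) := by
    intro A lam
    rw [hgendef, map_prod]
    apply Finset.prod_congr rfl
    intro j _
    rw [map_sub, heval_sum, eval_C]
  have heval_L : ∀ lam : Fin n → ℤ,
      eval (fun a => (lam a : ℚ)) L = ((∑ a, lam a - ((r:ℤ) - (s:ℤ)) : ℤ) : ℚ) := by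
    intro lam
    rw [hLdef, map_sub, heval_sum, eval_C]
    push_cast
    ring
  apply le_antisymm
  · -- vanishing ideal ⊆ span
    intro f hf
    rw [mem_vanishingIdeal_iff] at hf
    have hTmem : ∀ v : ℤ, -(s:ℤ) ≤ v → v ≤ (r:ℤ) → ((v:ℚ) ∈ T) := by
      intro v h1 h2
      rw [hTdef, Finset.mem_image]
      refine ⟨((r:ℤ) - v).toNat, ?_, ?_⟩
      · simp only [Finset.mem_range]; omega
      · have hj : ((((r:ℤ) - v).toNat : ℤ)) = (r:ℤ) - v := Int.toNat_of_nonneg (by omega)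
        have h3 : ((((r:ℤ) - v).toNat : ℤ) : ℚ) = (r:ℚ) - (v:ℚ) := by rw [hj]; push_cast; ring
        push_cast at h3 ⊢
        rw [h3]; ring
    have hTmem' : ∀ t ∈ T, ∃ v : ℤ, -(s:ℤ) ≤ v ∧ v ≤ (r:ℤ) ∧ ((v:ℚ) = t) := by
      intro t ht
      rw [hTdef, Finset.mem_image] at ht
      obtain ⟨j, hj, rfl⟩ := ht
      rw [Finset.mem_range] at hj
      exact ⟨(r:ℤ) - (j:ℤ), by omega, by omega, by push_cast; ring⟩
    have hsing : ∀ a : Fin n,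
        (∑ b ∈ ({a} : Finset (Fin n)), (X b : MvPolynomial (Fin n) ℚ)) = X a :=
      fun a => Finset.sum_singleton _ _
    have hga : ∀ a : Fin n, (∏ t ∈ T, ((X a : MvPolynomial (Fin n) ℚ) - C t)) ∈
        Ideal.span Gens := by
      intro a
      by_cases hau : ({a} : Finset (Fin n)) = Finset.univ
      · have hrs : ((r:ℚ) - (s:ℚ)) ∈ T := by
          have h4 := hTmem ((r:ℤ) - (s:ℤ)) (by omega) (by omega)
          push_cast at h4; exact h4
        rw [← Finset.mul_prod_erase T _ hrs]
        have hXa : (X a : MvPolynomial (Fin n) ℚ) - C ((r:ℚ)-(s:ℚ)) = L := by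
          rw [hLdef, show (Finset.univ : Finset (Fin n)) = {a} from hau.symm, hsing a]
        rw [hXa]
        exact Ideal.mul_mem_right _ _ (Ideal.subset_span (Or.inl rfl))
      · have him : (∏ t ∈ T, ((X a : MvPolynomial (Fin n) ℚ) - C t)) =
            ∏ j ∈ Finset.range (r+s+1), (X a - C ((r:ℚ) - (j:ℚ))) := by
          rw [hTdef]
          apply Finset.prod_image
          intro i hi j hj hij
          have h5 : (i:ℚ) = (j:ℚ) := by linarith
          exact_mod_cast h5
        have hgen_a : (∏ j ∈ Finset.range (r+s+1),
            ((X a : MvPolynomial (Fin n) ℚ) - C ((r:ℚ)-(j:ℚ)))) = gen {a} := by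
          rw [hgendef]
          apply Finset.prod_congr rfl
          intro j _
          rw [hsing a]
        rw [him, hgen_a]
        exact Ideal.subset_span (Or.inr ⟨{a}, ⟨Finset.singleton_nonempty a, hau⟩, rfl⟩)
    have hSgrid : ∀ p ∈ S, ∀ a : Fin n, p a ∈ T := by
      rintro p ⟨lam, ⟨hsum, hsub⟩, rfl⟩ a
      by_cases hau : ({a} : Finset (Fin n)) = Finset.univ
      · have h6 : lam a = ∑ b, lam b := by
          rw [show (Finset.univ : Finset (Fin n)) = {a} from hau.symm, Finset.sum_singleton]
        exact hTmem (lam a) (by omega) (by omega)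
      · obtain ⟨h1, h2⟩ := hsub {a} (Finset.singleton_nonempty a) hau
        rw [Finset.sum_singleton] at h1 h2
        exact hTmem _ h1 h2
    have hwitness : ∀ x : Fin n → ℚ, (∀ a, x a ∈ T) → x ∉ S →
        ∃ h ∈ Gens, eval x h ≠ 0 := by
      intro x hx hxS
      have hchoice : ∀ a, ∃ v : ℤ, -(s:ℤ) ≤ v ∧ v ≤ (r:ℤ) ∧ ((v:ℚ) = x a) :=
        fun a => hTmem' _ (hx a)
      choose lam hl1 hl2 hl3 using hchoice
      have hxeq : x = fun a => (lam a : ℚ) := funext fun a => (hl3 a).symm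
      have hlamD : lam ∉ D := fun hc => hxS ⟨lam, hc, hxeq.symm⟩
      rw [hDdef, Set.mem_setOf_eq] at hlamD
      by_cases hsum : (∑ a, lam a) = (r:ℤ) - (s:ℤ)
      · have h7 : ¬ ∀ A : Finset (Fin n), A.Nonempty → A ≠ Finset.univ →
            (-(s:ℤ) ≤ ∑ a ∈ A, lam a ∧ (∑ a ∈ A, lam a) ≤ (r:ℤ)) :=
          fun h => hlamD ⟨hsum, h⟩
        push_neg at h7
        obtain ⟨A, hA1, hA2, hA3⟩ := h7
        refine ⟨gen A, Or.inr ⟨A, ⟨hA1, hA2⟩, rfl⟩, ?_⟩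
        rw [hxeq, heval_gen]
        apply hprod_ne_zero r s
        intro hcon
        exact absurd hcon.2 (not_le.mpr (hA3 hcon.1))
      · refine ⟨L, Or.inl rfl, ?_⟩
        rw [hxeq, heval_L]
        rw [ne_eq, Int.cast_eq_zero]
        omega
    set gridF : Finset (Fin n → ℚ) := Fintype.piFinset (fun _ : Fin n => T) with hgridF
    set xs : Finset (Fin n → ℚ) := gridF.filter (fun x => x ∉ S) with hxsdef
    have hxs_mem : ∀ x ∈ xs, (∀ a, x a ∈ T) ∧ x ∉ S := by
      intro x hx
      rw [hxsdef, Finset.mem_filter] at hx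
      exact ⟨Fintype.mem_piFinset.mp hx.1, hx.2⟩
    have hwit : ∀ x ∈ xs, ∃ h ∈ Gens, eval x h ≠ 0 :=
      fun x hx => hwitness x (hxs_mem x hx).1 (hxs_mem x hx).2
    choose! hpoly hpmem hpne using hwit
    set u : (Fin n → ℚ) → MvPolynomial (Fin n) ℚ :=
      fun x => (C (eval x (hpoly x))⁻¹ * lag T x) * hpoly x with hu
    have humem : ∀ x ∈ xs, u x ∈ Ideal.span Gens :=
      fun x hx => Ideal.mul_mem_left _ _ (Ideal.subset_span (hpmem x hx))
    have hueval_self : ∀ x ∈ xs, eval x (u x) = 1 := by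
      intro x hx
      rw [hu]
      simp only [map_mul, eval_C, eval_lag_self, mul_one]
      exact inv_mul_cancel₀ (hpne x hx)
    have hueval_ne : ∀ x y : Fin n → ℚ, (∀ a, y a ∈ T) → y ≠ x → eval y (u x) = 0 := by
      intro x y hy hne
      rw [hu]
      simp only [map_mul]
      rw [eval_lag_ne T x y hy hne]
      ring
    set f' : MvPolynomial (Fin n) ℚ := f - ∑ x ∈ xs, C (eval x f) * u x with hf'def
    have hf'grid : ∀ y : Fin n → ℚ, (∀ a, y a ∈ T) → eval y f' = 0 := by
      intro y hy
      rw [hf'def, map_sub, map_sum]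
      by_cases hyS : y ∈ S
      · have h1 : eval y f = 0 := hf y hyS
        have h2 : ∀ x ∈ xs, eval y (C (eval x f) * u x) = 0 := by
          intro x hx
          have h8 : y ≠ x := fun hcon => (hxs_mem x hx).2 (hcon ▸ hyS)
          rw [map_mul, hueval_ne x y hy h8, mul_zero]
        rw [h1, Finset.sum_eq_zero h2, sub_zero]
      · have hyxs : y ∈ xs := by
          rw [hxsdef, Finset.mem_filter]
          exact ⟨Fintype.mem_piFinset.mpr hy, hyS⟩
        rw [Finset.sum_eq_single_of_mem y hyxs
          (fun x hx hne => by rw [map_mul, hueval_ne x y hy hne.symm, mul_zero])]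
        rw [map_mul, eval_C, hueval_self y hyxs, mul_one, sub_self]
    have hf'mem : f' ∈ Ideal.span Gens := by
      have h1 := grid_lemma n T f' hf'grid
      have h2 : Ideal.span (Set.range fun a : Fin n =>
          ∏ t ∈ T, ((X a : MvPolynomial (Fin n) ℚ) - C t)) ≤ Ideal.span Gens := by
        rw [Ideal.span_le]
        rintro _ ⟨a, rfl⟩
        exact hga a
      exact h2 h1
    have hfeq : f = f' + ∑ x ∈ xs, C (eval x f) * u x := by rw [hf'def]; ring
    rw [hfeq]
    exact Ideal.add_mem _ hf'mem
      (Ideal.sum_mem _ (fun x hx => Ideal.mul_mem_left _ _ (humem x hx)))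
  · -- span ⊆ vanishing ideal
    rw [Ideal.span_le]
    intro q hq
    rw [SetLike.mem_coe, mem_vanishingIdeal_iff]
    rintro x ⟨lam, ⟨hsum, hsub⟩, rfl⟩
    change eval (fun a => (lam a : ℚ)) q = 0
    rcases hq with hq | ⟨A, ⟨hA1, hA2⟩, rfl⟩
    · rw [Set.mem_singleton_iff] at hq
      subst hq
      rw [heval_L, hsum]
      simp
    · rw [heval_gen]
      obtain ⟨h1, h2⟩ := hsub A hA1 hA2
      exact hprod_zero r s _ h1 h2
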